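/- The composition R₂ ∗ R₁ of arrows R₁ : n → m and R₂ : m → k in the category Gen (defined as the restriction of the transitive closure of R₁ ∪ R₂⁺ⁿ to positions in n and the final k block, with the middle m block removed and indices renumbered) is an equivalence relation on n + k. -/

import Mathlib

/-- `R` is an equivalence relation on the finite ordinal `N` (as a subset of ℕ). -/
def IsEquivOn (R : ℕ → ℕ → Prop) (N : ℕ) : Prop :=
  (∀ x y, R x y → x < N ∧ y < N) ∧ (∀ x, x < N → R x x) ∧
    (∀ x y, R x y → R y x) ∧ (∀ x y z, R x y → R y z → R x z)

/-- The relation `R⁺ᵏ`: shift `R` upwards by `k`. -/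
def shiftRel (R : ℕ → ℕ → Prop) (k : ℕ) : ℕ → ℕ → Prop :=
  fun x y => k ≤ x ∧ k ≤ y ∧ R (x - k) (y - k)

/-- Transitive closure of `R₁ ∪ R₂⁺ⁿ`. -/
def glueRel (n : ℕ) (R₁ R₂ : ℕ → ℕ → Prop) : ℕ → ℕ → Prop :=
  Relation.TransGen (fun a b => R₁ a b ∨ shiftRel R₂ n a b)

/-- Renumbering of the outer blocks `n ∪ kⁿ⁺ᵐ` into `n + k`. -/
def embOuter (n m : ℕ) (x : ℕ) : ℕ := if x < n then x else x + m

/-- Composition `R₂ ∗ R₁` in the category Gen: restrict the transitive closure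
of `R₁ ∪ R₂⁺ⁿ` to the outer blocks and renumber. -/
def genComp (n m k : ℕ) (R₂ R₁ : ℕ → ℕ → Prop) : ℕ → ℕ → Prop :=
  fun x y => x < n + k ∧ y < n + k ∧
    glueRel n R₁ R₂ (embOuter n m x) (embOuter n m y)

/-- The identity arrow `1ₙ` of Gen: `x` and `y` are related iff `x ≡ y (mod n)`. -/
def genId (n : ℕ) : ℕ → ℕ → Prop :=
  fun x y => x < n + n ∧ y < n + n ∧ x % n = y % n

/-- The composition `R₂ ∗ R₁` of arrows of Gen is an equivalence relation on `n+k`. -/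
theorem genComp_isEquivOn (n m k : ℕ) (R₁ R₂ : ℕ → ℕ → Prop)
    (h₁ : IsEquivOn R₁ (n + m)) (h₂ : IsEquivOn R₂ (m + k)) :
    IsEquivOn (genComp n m k R₂ R₁) (n + k) := by
  obtain ⟨-, h₁r, h₁s, -⟩ := h₁
  obtain ⟨-, h₂r, h₂s, -⟩ := h₂
  refine ⟨fun x y h => ⟨h.1, h.2.1⟩, ?_, ?_, ?_⟩
  · intro x hx
    refine ⟨hx, hx, Relation.TransGen.single ?_⟩
    unfold embOuter
    split
    · exact Or.inl (h₁r x (by omega))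
    · exact Or.inr ⟨by omega, by omega, h₂r _ (by omega)⟩
  · rintro x y ⟨hx, hy, h⟩
    refine ⟨hy, hx, Relation.TransGen.mono ?_ _ _ h.swap⟩
    intro a b hab
    exact hab.elim (fun h => Or.inl (h₁s _ _ h))
      (fun h => Or.inr ⟨h.2.1, h.1, h₂s _ _ h.2.2⟩)
  · rintro x y z ⟨hx, hy, h⟩ ⟨-, hz, h'⟩
    exact ⟨hx, hz, h.trans h'⟩
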